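/- Measure of the stable reverse-hyperbolic-time block: Let (X, μ) be a probability space, f : X → X an invertible bimeasurable measure-preserving map with μ ergodic, and φ : X → ℝ a measurable function with φ(z) ≥ −L̄ for all z ∈ X. Let c > 0 with L̄ ≥ c and suppose that for μ-almost every x one has limsup_{n→∞} (1/n)·Σ_{j=1}^{n} φ(f^{−j}(x)) < −c. Then μ({x ∈ X : S_kφ(x) ≤ −(7c/8)·k for every k ≥ 1}) ≥ c/(8L̄ − 7c). -/

import Mathlib

open MeasureTheory Filter
open scoped ENNReal


private lemma count_bound_aux (A : ℕ → ℝ) (L' : ℝ) (P : ℕ → Prop) [DecidablePred P]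
    (hL' : 0 < L') (hA0 : A 0 = 0) (hstep : ∀ n, A n - L' ≤ A (n + 1))
    (hP : ∀ n, P n ↔ ∀ i < n, A n ≤ A i) :
    ∀ N, ∀ j ≤ N, -(L' * ((Finset.Icc 1 N).filter P).card) ≤ A j := by
  intro N
  induction N with
  | zero =>
    intro j hj
    interval_cases j
    rw [hA0]
    have : (0:ℝ) ≤ L' * ((Finset.Icc 1 0).filter P).card := by positivity
    linarith
  | succ N ih =>
    have hsub : (Finset.Icc 1 N).filter P ⊆ (Finset.Icc 1 (N + 1)).filter P :=
      Finset.filter_subset_filter _ (Finset.Icc_subset_Icc le_rfl (by omega))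
    have hcard : (((Finset.Icc 1 N).filter P).card : ℝ) ≤
        ((Finset.Icc 1 (N + 1)).filter P).card := by
      exact_mod_cast Finset.card_le_card hsub
    intro j hj
    rcases Nat.lt_or_ge j (N + 1) with h | h
    · have h1 := ih j (by omega)
      nlinarith
    · have hj' : j = N + 1 := by omega
      subst hj'
      by_cases hPn : P (N + 1)
      · have hins : Finset.Icc 1 (N + 1) = insert (N + 1) (Finset.Icc 1 N) := by
          ext i; simp only [Finset.mem_Icc, Finset.mem_insert]; omega
        have hnm : N + 1 ∉ (Finset.Icc 1 N).filter P := by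
          intro h'; have := Finset.mem_of_mem_filter _ h'
          simp [Finset.mem_Icc] at this
        have hcs : ((Finset.Icc 1 (N + 1)).filter P).card
            = ((Finset.Icc 1 N).filter P).card + 1 := by
          rw [hins, Finset.filter_insert, if_pos hPn, Finset.card_insert_of_notMem hnm]
        have h1 := ih N le_rfl
        have h2 := hstep N
        rw [hcs]; push_cast; linarith
      · rw [hP] at hPn
        push_neg at hPn
        obtain ⟨i, hi, hAi⟩ := hPn
        have h1 := ih i (by omega)
        nlinarith


private lemma liminf_count_aux (K : ℕ → ℕ) (r b : ℝ) (hr : 0 ≤ r)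
    (hK : ∀ᶠ N in atTop, r * N - b ≤ (K N : ℝ)) :
    ENNReal.ofReal r ≤ atTop.liminf (fun N => (K N : ℝ≥0∞) / N) := by
  have h0 : Tendsto (fun N : ℕ => r - b / N) atTop (nhds r) := by
    simpa using tendsto_const_nhds.sub (tendsto_const_div_atTop_nhds_zero_nat b)
  have hG : Tendsto (fun N : ℕ => (r * N - b) / N) atTop (nhds r) := by
    refine h0.congr' ?_
    filter_upwards [eventually_ge_atTop 1] with N hN
    have hNpos : (0:ℝ) < N := by exact_mod_cast hN
    field_simp
  have hG' : Tendsto (fun N : ℕ => ENNReal.ofReal ((r * N - b) / N)) atTop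
      (nhds (ENNReal.ofReal r)) := (ENNReal.continuous_ofReal.tendsto r).comp hG
  have hle : ∀ᶠ N : ℕ in atTop,
      ENNReal.ofReal ((r * N - b) / N) ≤ (K N : ℝ≥0∞) / N := by
    filter_upwards [hK, eventually_ge_atTop 1] with N h1 h2
    have hNpos : (0:ℝ) < N := by exact_mod_cast h2
    have heq : (K N : ℝ≥0∞) / N = ENNReal.ofReal ((K N : ℝ) / N) := by
      rw [ENNReal.ofReal_div_of_pos hNpos, ENNReal.ofReal_natCast, ENNReal.ofReal_natCast]
    rw [heq]
    exact ENNReal.ofReal_le_ofReal (by gcongr)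
  calc ENNReal.ofReal r
      = atTop.liminf (fun N : ℕ => ENNReal.ofReal ((r * N - b) / N)) := hG'.liminf_eq.symm
    _ ≤ atTop.liminf (fun N => (K N : ℝ≥0∞) / N) := liminf_le_liminf hle


private lemma iter_symm_aux {X : Type*} [MeasurableSpace X] (f : X ≃ᵐ X) :
    ∀ (i n : ℕ), i ≤ n → ∀ x, (⇑f)^[i] ((⇑f.symm)^[n] x) = (⇑f.symm)^[n - i] x := by
  intro i
  induction i with
  | zero => intro n _ x; simp
  | succ i ih =>
    intro n hin x
    have h1 : (⇑f)^[i + 1] ((⇑f.symm)^[n] x) = ⇑f ((⇑f)^[i] ((⇑f.symm)^[n] x)) :=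
      Function.iterate_succ_apply' _ _ _
    rw [h1, ih n (by omega) x]
    have h2 : n - i = (n - (i + 1)) + 1 := by omega
    rw [h2, Function.iterate_succ_apply']
    exact f.apply_symm_apply _

private lemma pointwise_aux {X : Type*} [MeasurableSpace X] (f : X ≃ᵐ X) (φ : X → ℝ)
    (L c : ℝ) (hφ : ∀ z, -L ≤ φ z) (hc : 0 < c) (hcL : c ≤ L) (m : ℕ) (x : X)
    (p : ℕ → Prop) [DecidablePred p]
    (hp : ∀ n, m ≤ n →
      (∀ k, 1 ≤ k → k ≤ m → birkhoffSum (⇑f) φ k ((⇑f.symm)^[n] x) ≤ -(7*c/8)*k) → p n)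
    (hx : limsup (fun n : ℕ =>
      (∑ j ∈ Finset.Icc 1 n, φ ((⇑f.symm)^[j] x)) / n) atTop < -c) :
    ENNReal.ofReal (c / (8*L - 7*c)) ≤
      atTop.liminf (fun N => ((((Finset.range N).filter p).card : ℝ≥0∞)) / N) := by
  classical
  obtain ⟨L', hL'def⟩ : ∃ L' : ℝ, L' = L - 7*c/8 := ⟨_, rfl⟩
  have hL' : 0 < L' := by rw [hL'def]; linarith
  obtain ⟨A, hAdef⟩ : ∃ A : ℕ → ℝ,
      A = fun n => (∑ j ∈ Finset.Icc 1 n, φ ((⇑f.symm)^[j] x)) + 7*c/8 * n := ⟨_, rfl⟩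
  have hA0 : A 0 = 0 := by simp [hAdef]
  have hstep : ∀ n, A n - L' ≤ A (n + 1) := by
    intro n
    have h1 : ∑ j ∈ Finset.Icc 1 (n+1), φ ((⇑f.symm)^[j] x)
        = (∑ j ∈ Finset.Icc 1 n, φ ((⇑f.symm)^[j] x)) + φ ((⇑f.symm)^[n+1] x) :=
      Finset.sum_Icc_succ_top (by omega) _
    have h2 := hφ ((⇑f.symm)^[n+1] x)
    rw [hAdef, hL'def]
    simp only [h1]
    push_cast
    linarith
  have hcount := count_bound_aux A L' (fun n => ∀ i < n, A n ≤ A i) hL' hA0 hstep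
    (fun n => Iff.rfl)
  -- birkhoff sums along the backward orbit
  have hbs : ∀ n k, 1 ≤ k → k ≤ n →
      birkhoffSum (⇑f) φ k ((⇑f.symm)^[n] x) + 7*c/8*k = A n - A (n - k) := by
    intro n k hk1 hkn
    have e1 : birkhoffSum (⇑f) φ k ((⇑f.symm)^[n] x)
        = ∑ i ∈ Finset.range k, φ ((⇑f.symm)^[n - i] x) := by
      simp only [birkhoffSum]
      exact Finset.sum_congr rfl fun i hi => by
        rw [iter_symm_aux f i n (by have := Finset.mem_range.mp hi; omega) x]
    have e2 : ∑ i ∈ Finset.range k, φ ((⇑f.symm)^[n - i] x)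
        = ∑ j ∈ Finset.Ioc (n - k) n, φ ((⇑f.symm)^[j] x) := by
      refine Finset.sum_bij' (fun i _ => n - i) (fun j _ => n - j) ?_ ?_ ?_ ?_ ?_
      · intro a ha
        have := Finset.mem_range.mp ha
        simp only [Finset.mem_Ioc]
        omega
      · intro a ha
        have := Finset.mem_Ioc.mp ha
        simp only [Finset.mem_range]
        omega
      · intro a ha; have := Finset.mem_range.mp ha; show n - (n - a) = a; omega
      · intro a ha; have := Finset.mem_Ioc.mp ha; show n - (n - a) = a; omega
      · intro a ha; rfl
    have hI : ∀ t : ℕ, Finset.Icc 1 t = Finset.Ioc 0 t := fun t => Finset.Icc_add_one_left_eq_Ioc 0 t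
    have hsplit := Finset.sum_Ioc_consecutive (fun j => φ ((⇑f.symm)^[j] x))
      (Nat.zero_le (n - k)) (Nat.sub_le n k)
    have hcast : ((n - k : ℕ) : ℝ) = (n : ℝ) - (k : ℝ) := Nat.cast_sub hkn
    rw [e1, e2, hAdef]
    simp only [hI, hcast]
    simp only [← hsplit]
    ring
  -- eventual decay of backward sums
  have humem : ∀ n : ℕ, 1 ≤ n →
      -L ≤ (∑ j ∈ Finset.Icc 1 n, φ ((⇑f.symm)^[j] x)) / n := by
    intro n hn
    have hnpos : (0:ℝ) < n := by exact_mod_cast hn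
    have hsum : -L * n ≤ ∑ j ∈ Finset.Icc 1 n, φ ((⇑f.symm)^[j] x) := by
      calc -L * n = ∑ _j ∈ Finset.Icc 1 n, (-L) := by
            rw [Finset.sum_const, Nat.card_Icc]
            simp [nsmul_eq_mul]
            ring
        _ ≤ _ := Finset.sum_le_sum fun j _ => hφ _
    calc -L = (-L * n) / n := by field_simp
      _ ≤ _ := by gcongr
  rw [Filter.limsup_eq] at hx
  have hne : {a : ℝ | ∀ᶠ n : ℕ in atTop,
      (∑ j ∈ Finset.Icc 1 n, φ ((⇑f.symm)^[j] x)) / n ≤ a}.Nonempty := by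
    by_contra h
    rw [Set.not_nonempty_iff_eq_empty] at h
    rw [h, Real.sInf_empty] at hx
    linarith
  have hbdd : BddBelow {a : ℝ | ∀ᶠ n : ℕ in atTop,
      (∑ j ∈ Finset.Icc 1 n, φ ((⇑f.symm)^[j] x)) / n ≤ a} := by
    refine ⟨-L, fun a ha => ?_⟩
    obtain ⟨n, hn1, hn2⟩ := (ha.and (eventually_ge_atTop 1)).exists
    exact le_trans (humem n hn2) hn1
  obtain ⟨a, ha, hac⟩ := (csInf_lt_iff hbdd hne).mp hx
  obtain ⟨N₁, hN₁⟩ := eventually_atTop.mp ha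
  have hAev : ∀ n : ℕ, max N₁ 1 ≤ n → A n ≤ -(c/8) * n := by
    intro n hn
    have h1 : (∑ j ∈ Finset.Icc 1 n, φ ((⇑f.symm)^[j] x)) / n ≤ a :=
      hN₁ n (le_trans (le_max_left _ _) hn)
    have hnpos : (0:ℝ) < n := by
      have : 1 ≤ n := le_trans (le_max_right _ _) hn
      exact_mod_cast this
    have h2 : (∑ j ∈ Finset.Icc 1 n, φ ((⇑f.symm)^[j] x)) ≤ a * n :=
      (div_le_iff₀ hnpos).mp h1
    have h3 : a * n ≤ -c * n := by nlinarith
    rw [hAdef]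
    push_cast
    linarith
  -- eventual lower bound on the count
  set r : ℝ := c / 8 / L' with hrdef
  have hr0 : 0 < r := by positivity
  have hKev : ∀ᶠ N : ℕ in atTop,
      r * N - ((m : ℝ) + r) ≤ (((Finset.range N).filter p).card : ℝ) := by
    rw [eventually_atTop]
    refine ⟨max N₁ 1 + 1, fun N hN => ?_⟩
    obtain ⟨M, rfl⟩ : ∃ M, N = M + 1 := ⟨N - 1, by omega⟩
    have hM1 : max N₁ 1 ≤ M := by omega
    have h1 := hcount M M le_rfl
    have h2 := hAev M hM1
    have hCM : r * M ≤ (((Finset.Icc 1 M).filter (fun n => ∀ i < n, A n ≤ A i)).card : ℝ) := by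
      rw [hrdef, div_mul_eq_mul_div, div_le_iff₀ hL']
      nlinarith
    -- relate counts
    have hsub1 : (Finset.Icc 1 M).filter (fun n => ∀ i < n, A n ≤ A i) ⊆
        ((Finset.Icc 1 M).filter (fun n => (∀ i < n, A n ≤ A i) ∧ m ≤ n)) ∪ Finset.range m := by
      intro n hn
      rw [Finset.mem_filter] at hn
      rw [Finset.mem_union, Finset.mem_filter, Finset.mem_range]
      by_cases h : m ≤ n
      · exact Or.inl ⟨hn.1, hn.2, h⟩
      · exact Or.inr (by omega)
    have hsub2 : (Finset.Icc 1 M).filter (fun n => (∀ i < n, A n ≤ A i) ∧ m ≤ n) ⊆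
        (Finset.range (M+1)).filter p := by
      intro n hn
      rw [Finset.mem_filter, Finset.mem_Icc] at hn
      obtain ⟨⟨hn1, hn2⟩, hPn, hmn⟩ := hn
      rw [Finset.mem_filter, Finset.mem_range]
      refine ⟨by omega, hp n hmn fun k hk1 hkm => ?_⟩
      have hkn : k ≤ n := le_trans hkm hmn
      have hb := hbs n k hk1 hkn
      have hAle := hPn (n - k) (by omega)
      linarith
    have hcards : ((Finset.Icc 1 M).filter (fun n => ∀ i < n, A n ≤ A i)).card ≤
        ((Finset.range (M+1)).filter p).card + m := by
      calc ((Finset.Icc 1 M).filter (fun n => ∀ i < n, A n ≤ A i)).card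
          ≤ (((Finset.Icc 1 M).filter (fun n => (∀ i < n, A n ≤ A i) ∧ m ≤ n)) ∪ Finset.range m).card :=
            Finset.card_le_card hsub1
        _ ≤ ((Finset.Icc 1 M).filter (fun n => (∀ i < n, A n ≤ A i) ∧ m ≤ n)).card + m := by
            have := Finset.card_union_le ((Finset.Icc 1 M).filter (fun n => (∀ i < n, A n ≤ A i) ∧ m ≤ n))
              (Finset.range m)
            simpa [Finset.card_range] using this
        _ ≤ ((Finset.range (M+1)).filter p).card + m := by
            have := Finset.card_le_card hsub2
            omega
    have hcards' : (((Finset.Icc 1 M).filter (fun n => ∀ i < n, A n ≤ A i)).card : ℝ) ≤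
        (((Finset.range (M+1)).filter p).card : ℝ) + m := by exact_mod_cast hcards
    push_cast
    linarith
  have hfinal := liminf_count_aux (fun N => ((Finset.range N).filter p).card) r
    ((m : ℝ) + r) hr0.le hKev
  have hr_eq : c / (8*L - 7*c) = r := by
    rw [hrdef, hL'def, div_div]
    congr 1
    ring
  rw [hr_eq]
  exact hfinal

/-- **Measure of the stable reverse-hyperbolic-time block.** Let `(X, μ)` be a probability
space, `f` an invertible bimeasurable measure-preserving map with `μ` ergodic, and `φ`
measurable with `φ ≥ −L̄`. Let `L̄ ≥ c > 0` and suppose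
`limsup_n (1/n)·Σ_{j=1}^n φ(f^{−j}(x)) < −c` for `μ`-a.e. `x`. Then the set of points `x`
such that `S_kφ(x) ≤ −(7c/8)·k` for every `k ≥ 1` has `μ`-measure at least
`c/(8L̄ − 7c)`. -/
theorem stable_reverse_hyperbolic_block_measure {X : Type*} [MeasurableSpace X]
    (μ : Measure X) [IsProbabilityMeasure μ]
    (f : X ≃ᵐ X) (herg : Ergodic (⇑f) μ)
    (φ : X → ℝ) (hφm : Measurable φ) (L : ℝ) (hφ : ∀ z, -L ≤ φ z)
    (c : ℝ) (hc : 0 < c) (hcL : c ≤ L)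
    (hae : ∀ᵐ x ∂μ,
      limsup (fun n : ℕ =>
        (∑ j ∈ Finset.Icc 1 n, φ ((⇑f.symm)^[j] x)) / n) atTop < -c) :
    ENNReal.ofReal (c / (8 * L - 7 * c)) ≤
      μ {x | ∀ k : ℕ, 1 ≤ k →
        birkhoffSum (⇑f) φ k x ≤ -(7 * c / 8) * k} := by
  classical
  have hmp : MeasurePreserving (⇑f) μ μ := herg.toMeasurePreserving
  have hmps : MeasurePreserving (⇑f.symm) μ μ := hmp.symm f
  set E : ℕ → Set X :=
    fun m => {y | ∀ k, 1 ≤ k → k ≤ m → birkhoffSum (⇑f) φ k y ≤ -(7*c/8) * k} with hEdef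
  have hbm : ∀ k : ℕ, Measurable fun y => birkhoffSum (⇑f) φ k y :=
    fun k => Finset.measurable_sum _ fun i _ => hφm.comp (f.measurable.iterate i)
  have hEmeas : ∀ m, MeasurableSet (E m) := by
    intro m
    have : E m = ⋂ k ∈ Finset.Icc 1 m, {y | birkhoffSum (⇑f) φ k y ≤ -(7*c/8) * k} := by
      ext y
      simp only [hEdef, Set.mem_iInter, Set.mem_setOf_eq, Finset.mem_Icc]
      exact ⟨fun h k hk => h k hk.1 hk.2, fun h k h1 h2 => h k ⟨h1, h2⟩⟩
    rw [this]
    exact MeasurableSet.biInter (Finset.Icc 1 m).countable_toSet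
      fun k _ => measurableSet_le (hbm k) measurable_const
  -- Step 1: each E m has measure at least the target
  have key : ∀ m, ENNReal.ofReal (c / (8 * L - 7 * c)) ≤ μ (E m) := by
    intro m
    set F : ℕ → X → ℝ≥0∞ := fun N y =>
      (∑ n ∈ Finset.range N,
        Set.indicator ((⇑f.symm)^[n] ⁻¹' (E m)) (1 : X → ℝ≥0∞) y) / N with hFdef
    have hFmeas : ∀ N, Measurable (F N) := by
      intro N
      apply Measurable.div_const
      exact Finset.measurable_sum _ fun n _ =>
        measurable_one.indicator ((f.symm.measurable.iterate n) (hEmeas m))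
    have hFeq : ∀ N y, F N y =
        ((((Finset.range N).filter (fun n => (⇑f.symm)^[n] y ∈ E m)).card : ℝ≥0∞)) / N := by
      intro N y
      rw [hFdef]
      simp only [Set.indicator_apply, Set.mem_preimage, Pi.one_apply, Finset.sum_boole]
      congr 1
      convert Finset.sum_boole (R := ℝ≥0∞) (fun n => (⇑f.symm)^[n] y ∈ E m) (Finset.range N)
    have hlint : ∀ N : ℕ, 1 ≤ N → ∫⁻ y, F N y ∂μ = μ (E m) := by
      intro N hN
      have h1 : ∀ n : ℕ, ∫⁻ y, Set.indicator ((⇑f.symm)^[n] ⁻¹' (E m))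
          (1 : X → ℝ≥0∞) y ∂μ = μ (E m) := by
        intro n
        rw [lintegral_indicator_one ((f.symm.measurable.iterate n) (hEmeas m))]
        exact (hmps.iterate n).measure_preimage (hEmeas m).nullMeasurableSet
      calc ∫⁻ y, F N y ∂μ
          = (∫⁻ y, ∑ n ∈ Finset.range N,
              Set.indicator ((⇑f.symm)^[n] ⁻¹' (E m)) (1 : X → ℝ≥0∞) y ∂μ) / N := by
            rw [hFdef]
            simp only [div_eq_mul_inv]
            rw [lintegral_mul_const _ (Finset.measurable_sum _ fun n _ =>
              measurable_one.indicator ((f.symm.measurable.iterate n) (hEmeas m)))]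
        _ = (∑ n ∈ Finset.range N, μ (E m)) / N := by
            rw [lintegral_finset_sum _ fun n _ =>
              measurable_one.indicator ((f.symm.measurable.iterate n) (hEmeas m))]
            simp only [h1]
        _ = μ (E m) := by
            rw [Finset.sum_const, Finset.card_range, nsmul_eq_mul]
            have hN0 : (N : ℝ≥0∞) ≠ 0 := by
              exact_mod_cast (by omega : N ≠ 0)
            have hNt : (N : ℝ≥0∞) ≠ ⊤ := ENNReal.natCast_ne_top N
            rw [mul_comm, mul_div_assoc, ENNReal.div_self hN0 hNt, mul_one]
    -- Fatou chain
    have hpt : ∀ᵐ x ∂μ, ENNReal.ofReal (c / (8 * L - 7 * c)) ≤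
        atTop.liminf (fun N => F N x) := by
      filter_upwards [hae] with x hx
      have := pointwise_aux f φ L c hφ hc hcL m x
        (fun n => (⇑f.symm)^[n] x ∈ E m) (fun n _ h => h) hx
      have hfe : (fun N => F N x)
          = fun N => ((((Finset.range N).filter
              (fun n => (⇑f.symm)^[n] x ∈ E m)).card : ℝ≥0∞)) / N :=
        funext fun N => hFeq N x
      rw [hfe]
      exact this
    calc ENNReal.ofReal (c / (8 * L - 7 * c))
        = ∫⁻ _, ENNReal.ofReal (c / (8 * L - 7 * c)) ∂μ := by
          rw [lintegral_const, measure_univ, mul_one]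
      _ ≤ ∫⁻ x, atTop.liminf (fun N => F N x) ∂μ := lintegral_mono_ae hpt
      _ ≤ atTop.liminf (fun N => ∫⁻ x, F N x ∂μ) := lintegral_liminf_le hFmeas
      _ = μ (E m) := by
          have hev : (fun N => ∫⁻ x, F N x ∂μ) =ᶠ[atTop] (fun _ => μ (E m)) := by
            filter_upwards [eventually_ge_atTop 1] with N hN
            exact hlint N hN
          rw [liminf_congr hev, liminf_const]
  -- Step 2: pass to the intersection
  have hSeq : {x | ∀ k : ℕ, 1 ≤ k → birkhoffSum (⇑f) φ k x ≤ -(7 * c / 8) * k}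
      = ⋂ m, E m := by
    ext y
    simp only [hEdef, Set.mem_iInter, Set.mem_setOf_eq]
    exact ⟨fun h m k h1 _ => h k h1, fun h k h1 => h k k h1 le_rfl⟩
  rw [hSeq]
  have hanti : Antitone E := by
    intro m m' hmm' y hy k h1 h2
    exact hy k h1 (h2.trans hmm')
  have htend : Tendsto (μ ∘ E) atTop (nhds (μ (⋂ m, E m))) :=
    tendsto_measure_iInter_atTop (fun m => (hEmeas m).nullMeasurableSet) hanti
      ⟨0, measure_ne_top μ _⟩
  exact ge_of_tendsto htend (Eventually.of_forall key)
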